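/- arXiv:2102.03714 — 2 statements merged into one kernel-verified Lean document; each statement's English description precedes it below -/
import Mathlib

section
/- For every arithmetic function g : ℕ → ℂ, every integer k ≥ 2, and every positive integer n, one has f_{(g,k)}(n) = Σ (μ*g)(a)·τ_k(b), where the sum runs over all pairs (a, b) of positive integers with a^k·b = n. -/
open Finset ArithmeticFunction

/-- The set of ordered `k`-tuples of positive integers whose product is `n`. -/
def piltzTuples (k n : ℕ) : Finset (Fin k → ℕ) :=
  (Fintype.piFinset fun _ => n.divisors).filter fun d => ∏ i, d i = n

/-- The Piltz divisor function `τ_k(n)`: the number of ordered `k`-tuples of positive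
integers with product `n`. -/
def piltzTau (k n : ℕ) : ℕ := (piltzTuples k n).card

/-- `f_{(g,k)}(n) = ∑_{d₁⋯d_k = n} g(gcd(d₁,…,d_k))`. -/
noncomputable def fgk (g : ℕ → ℂ) (k n : ℕ) : ℂ :=
  ∑ d ∈ piltzTuples k n, g (Finset.univ.gcd d)

/-- Dirichlet convolution of two arithmetic functions. -/
noncomputable def dirichletConv (f g : ℕ → ℂ) (n : ℕ) : ℂ :=
  ∑ d ∈ n.divisors, f d * g (n / d)

lemma mem_piltzTuples {k n : ℕ} (hn : n ≠ 0) {d : Fin k → ℕ} :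
    d ∈ piltzTuples k n ↔ ∏ i, d i = n := by
  simp only [piltzTuples, Finset.mem_filter, Fintype.mem_piFinset, Nat.mem_divisors]
  refine ⟨fun h => h.2, fun h => ⟨fun i => ⟨?_, hn⟩, h⟩⟩
  exact h ▸ Finset.dvd_prod_of_mem d (Finset.mem_univ i)

lemma sum_dirichletConv_moebius (g : ℕ → ℂ) {m : ℕ} (hm : 0 < m) :
    ∑ e ∈ m.divisors, dirichletConv (fun d => ((moebius d : ℤ) : ℂ)) g e = g m := by
  refine (ArithmeticFunction.sum_eq_iff_sum_mul_moebius_eq.mpr ?_) m hm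
  intro t ht
  rw [Nat.sum_divisorsAntidiagonal fun a b => ((moebius a : ℤ) : ℂ) * g b]
  rfl

lemma count_div {k e n : ℕ} (hn : n ≠ 0) (he0 : e ≠ 0) (he : e ^ k ∣ n) :
    ((piltzTuples k n).filter fun d => ∀ i, e ∣ d i).card = piltzTau k (n / e ^ k) := by
  have hek : e ^ k ≠ 0 := pow_ne_zero _ he0
  have hnek : n / e ^ k ≠ 0 := by
    intro h
    exact hn (by rw [← Nat.div_mul_cancel he, h, zero_mul])
  apply Finset.card_bij (fun d _ => fun i => d i / e)
  · intro d hd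
    simp only [Finset.mem_filter, mem_piltzTuples hn] at hd
    rw [mem_piltzTuples hnek]
    have : ∏ i, (e * (d i / e)) = n := by
      rw [Finset.prod_congr rfl fun i _ => Nat.mul_div_cancel' (hd.2 i)]
      exact hd.1
    rw [Finset.prod_mul_distrib, Finset.prod_const, Finset.card_univ,
      Fintype.card_fin] at this
    exact (Nat.div_eq_of_eq_mul_right (Nat.pos_of_ne_zero hek) this.symm).symm
  · intro d hd d' hd' h
    simp only [Finset.mem_filter] at hd hd'
    funext i
    have h1 := Nat.div_mul_cancel (hd.2 i)
    have h2 := Nat.div_mul_cancel (hd'.2 i)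
    have := congrFun h i
    rw [← h1, ← h2, this]
  · intro c hc
    rw [mem_piltzTuples hnek] at hc
    refine ⟨fun i => e * c i, ?_, ?_⟩
    · simp only [Finset.mem_filter, mem_piltzTuples hn]
      refine ⟨?_, fun i => Dvd.intro _ rfl⟩
      rw [Finset.prod_mul_distrib, Finset.prod_const, Finset.card_univ, Fintype.card_fin,
        hc, Nat.mul_div_cancel' he]
    · funext i
      exact Nat.mul_div_cancel_left _ (Nat.pos_of_ne_zero he0)

theorem stmt6 (g : ℕ → ℂ) (k : ℕ) (hk : 2 ≤ k) (n : ℕ) (hn : 0 < n) :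
    fgk g k n =
      ∑ p ∈ (n.divisors ×ˢ n.divisors).filter fun p => p.1 ^ k * p.2 = n,
        dirichletConv (fun d => ((moebius d : ℤ) : ℂ)) g p.1 * (piltzTau k p.2 : ℂ) := by
  have hn0 : n ≠ 0 := hn.ne'
  set h : ℕ → ℂ := dirichletConv (fun d => ((moebius d : ℤ) : ℂ)) g with hh
  -- facts about gcd of tuples in piltzTuples
  have hgcd : ∀ d ∈ piltzTuples k n, Finset.univ.gcd d ∣ n ∧ Finset.univ.gcd d ≠ 0 := by
    intro d hd
    rw [mem_piltzTuples hn0] at hd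
    have hi : ∀ i : Fin k, d i ≠ 0 := by
      intro i h0
      apply hn0
      rw [← hd]
      exact Finset.prod_eq_zero (Finset.mem_univ i) h0
    have hk0 : 0 < k := by omega
    have i0 : Fin k := ⟨0, hk0⟩
    constructor
    · exact dvd_trans (Finset.gcd_dvd (Finset.mem_univ i0))
        (hd ▸ Finset.dvd_prod_of_mem d (Finset.mem_univ i0))
    · intro h0
      exact hi i0 ((Finset.gcd_eq_zero_iff.mp h0) i0 (Finset.mem_univ i0))
  -- Step 1: Möbius inversion on each term
  have step1 : fgk g k n =
      ∑ d ∈ piltzTuples k n, ∑ e ∈ n.divisors, if e ∣ Finset.univ.gcd d then h e else 0 := by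
    unfold fgk
    refine Finset.sum_congr rfl fun d hd => ?_
    obtain ⟨hdvd, hne⟩ := hgcd d hd
    rw [← Finset.sum_filter]
    rw [show (n.divisors.filter fun e => e ∣ Finset.univ.gcd d) = (Finset.univ.gcd d).divisors
      from Nat.divisors_filter_dvd_of_dvd hn0 hdvd]
    exact (sum_dirichletConv_moebius g (Nat.pos_of_ne_zero hne)).symm
  rw [step1, Finset.sum_comm]
  -- Step 2: inner count
  have step2 : ∀ e ∈ n.divisors,
      (∑ d ∈ piltzTuples k n, if e ∣ Finset.univ.gcd d then h e else 0) =
      if e ^ k ∣ n then h e * (piltzTau k (n / e ^ k) : ℂ) else 0 := by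
    intro e he
    have he0 : e ≠ 0 := (Nat.pos_of_mem_divisors he).ne'
    rw [← Finset.sum_filter, Finset.sum_const, nsmul_eq_mul]
    have hfil : (piltzTuples k n).filter (fun d => e ∣ Finset.univ.gcd d) =
        (piltzTuples k n).filter fun d => ∀ i, e ∣ d i := by
      refine Finset.filter_congr fun d hd => ?_
      rw [Finset.dvd_gcd_iff]
      exact ⟨fun H i => H i (Finset.mem_univ i), fun H i _ => H i⟩
    rw [hfil]
    by_cases hek : e ^ k ∣ n
    · rw [if_pos hek, count_div hn0 he0 hek, mul_comm]
    · rw [if_neg hek]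
      convert zero_mul (h e)
      norm_cast
      rw [Finset.card_eq_zero, Finset.filter_eq_empty_iff]
      intro d hd hdvd
      rw [mem_piltzTuples hn0] at hd
      apply hek
      have hpd : (∏ _i : Fin k, e) ∣ ∏ i, d i := Finset.prod_dvd_prod_of_dvd _ _ fun i _ => hdvd i
      simpa [Finset.prod_const, hd] using hpd
  rw [Finset.sum_congr rfl step2, ← Finset.sum_filter]
  -- Step 3: reindex RHS
  refine Finset.sum_nbij' (fun a => (a, n / a ^ k)) (fun p => p.1) ?_ ?_ ?_ ?_ ?_
  · intro a ha
    simp only [Finset.mem_filter, Nat.mem_divisors] at ha ⊢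
    obtain ⟨⟨ha1, _⟩, hak⟩ := ha
    exact ⟨Finset.mem_product.mpr ⟨Nat.mem_divisors.mpr ⟨ha1, hn0⟩,
      Nat.mem_divisors.mpr ⟨Nat.div_dvd_of_dvd hak, hn0⟩⟩, Nat.mul_div_cancel' hak⟩
  · intro p hp
    simp only [Finset.mem_filter, Finset.mem_product, Nat.mem_divisors] at hp ⊢
    obtain ⟨⟨⟨h1, _⟩, _⟩, hpk⟩ := hp
    exact ⟨⟨h1, hn0⟩, ⟨p.2, hpk.symm⟩⟩
  · intro a ha; rfl
  · intro p hp
    simp only [Finset.mem_filter] at hp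
    have : n / p.1 ^ k = p.2 := by
      rw [← hp.2]; exact Nat.mul_div_cancel_left _ (Nat.pos_of_ne_zero (by
        intro h0; rw [h0, zero_mul] at hp; exact hn0 hp.2.symm))
    exact Prod.ext rfl this
  · intro a ha; rfl
end

section
/- For every integer k ≥ 2 and every real s > 1, the Dirichlet series Σ_{n=1}^∞ f_{(id,k)}(n)/n^s converges and equals ζ(s)^k·ζ(ks − 1)/ζ(ks). -/
open Finset

/-- `f_{(g,k)}(n) = ∑_{d₁⋯d_k = n} g(gcd(d₁,…,d_k))` (ℕ-valued version). -/
def fgkNat (g : ℕ → ℕ) (k n : ℕ) : ℕ :=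
  ∑ d ∈ piltzTuples k n, g (Finset.univ.gcd d)

open LSeries Complex
open scoped LSeries.notation

lemma piltz_eq {k : ℕ} (hk : k ≠ 0) (n : ℕ) : piltzTuples k n = Nat.finMulAntidiag k n := by
  rcases eq_or_ne n 0 with rfl | hn
  · rw [Nat.finMulAntidiag_zero_right]
    have : Nonempty (Fin k) := ⟨⟨0, Nat.pos_of_ne_zero hk⟩⟩
    ext f
    simp [piltzTuples]
  · rw [Nat.finMulAntidiag_eq_piFinset_divisors_filter dvd_rfl hn]
    rfl

/-- τ_k coefficients. -/
noncomputable def tauC (k : ℕ) : ℕ → ℂ := fun n => ((Nat.finMulAntidiag k n).card : ℂ)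

lemma card_finMulAntidiag_one {n : ℕ} (hn : n ≠ 0) : (Nat.finMulAntidiag 1 n).card = 1 := by
  rw [Finset.card_eq_one]
  refine ⟨fun _ => n, ?_⟩
  ext f
  simp only [Nat.mem_finMulAntidiag, Finset.mem_singleton, Fin.prod_univ_one]
  constructor
  · rintro ⟨h, -⟩
    funext i
    rw [Subsingleton.elim i 0]
    exact h
  · rintro rfl
    exact ⟨rfl, hn⟩

lemma card_finMulAntidiag_succ (k n : ℕ) :
    (Nat.finMulAntidiag (k + 1) n).card
      = ∑ p ∈ n.divisorsAntidiagonal, (Nat.finMulAntidiag k p.1).card := by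
  rw [Finset.card_eq_sum_card_fiberwise
    (f := fun d => ((∏ i : Fin k, d i.castSucc), d (Fin.last k)))
    (t := n.divisorsAntidiagonal) ?_]
  · refine Finset.sum_congr rfl fun p hp => ?_
    obtain ⟨hp1, hn0⟩ := Nat.mem_divisorsAntidiagonal.mp hp
    have hp1ne : p.1 ≠ 0 := left_ne_zero_of_mul (hp1.symm ▸ hn0)
    refine Finset.card_nbij' (fun d => Fin.init d) (fun c => Fin.snoc c p.2) ?_ ?_ ?_ ?_
    · intro d hd
      rw [Finset.mem_coe, Finset.mem_filter] at hd
      rw [Finset.mem_coe, Nat.mem_finMulAntidiag]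
      refine ⟨?_, hp1ne⟩
      have h1 := congrArg Prod.fst hd.2
      simpa [Fin.init] using h1
    · intro c hc
      rw [Finset.mem_coe, Nat.mem_finMulAntidiag] at hc
      simp only [Finset.mem_coe, Finset.mem_filter, Nat.mem_finMulAntidiag, Fin.prod_univ_castSucc,
        Fin.snoc_castSucc, Fin.snoc_last, Prod.ext_iff]
      exact ⟨⟨by rw [hc.1, hp1], hn0⟩, hc.1, trivial⟩
    · intro d hd
      rw [Finset.mem_coe, Finset.mem_filter] at hd
      have hlast : d (Fin.last k) = p.2 := congrArg Prod.snd hd.2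
      rw [← hlast]
      exact Fin.snoc_init_self d
    · intro c hc
      exact Fin.init_snoc _ _
  · intro d hd
    rw [Finset.mem_coe, Nat.mem_finMulAntidiag] at hd
    rw [Finset.mem_coe, Nat.mem_divisorsAntidiagonal]
    exact ⟨by rw [← Fin.prod_univ_castSucc]; exact hd.1, hd.2⟩

lemma LSeriesHasSum_tau_one {s : ℂ} (hs : 1 < s.re) :
    LSeriesHasSum (tauC 1) s (riemannZeta s) := by
  refine (LSeriesHasSum_congr s _ ?_).mpr (LSeriesHasSum_one hs)
  intro n hn
  simp [tauC, card_finMulAntidiag_one hn]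

lemma LSeriesHasSum_tau (k : ℕ) (hk : k ≠ 0) {s : ℂ} (hs : 1 < s.re) :
    LSeriesHasSum (tauC k) s (riemannZeta s ^ k) := by
  induction k with
  | zero => exact absurd rfl hk
  | succ k ih =>
    rcases Nat.eq_zero_or_pos k with rfl | hkpos
    · rw [pow_one]
      exact LSeriesHasSum_tau_one hs
    · have ihk := ih hkpos.ne'
      have hconv := ihk.convolution (LSeriesHasSum_tau_one hs)
      rw [pow_succ]
      refine (LSeriesHasSum_congr s _ ?_).mpr hconv
      intro n hn
      rw [LSeries.convolution_def]
      simp only [tauC]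
      rw [card_finMulAntidiag_succ k n]
      push_cast
      refine Finset.sum_congr rfl fun p hp => ?_
      have hp2 : p.2 ≠ 0 := by
        obtain ⟨h1, h2⟩ := Nat.mem_divisorsAntidiagonal.mp hp
        exact right_ne_zero_of_mul (h1.symm ▸ h2)
      rw [card_finMulAntidiag_one hp2]
      simp

lemma LSeriesHasSum_totient {w : ℂ} (hw : 2 < w.re) :
    LSeriesHasSum (fun n : ℕ => (n.totient : ℂ)) w (riemannZeta (w - 1) / riemannZeta w) := by
  have hw1 : 1 < w.re := by linarith
  set Φ : ℕ → ℂ := fun n => (n.totient : ℂ) with hΦdef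
  have hsum : LSeriesSummable Φ w := by
    refine LSeriesSummable_of_le_const_mul_rpow (x := 2) hw ⟨1, fun n hn => ?_⟩
    have hle : (n.totient : ℝ) ≤ (n : ℝ) := by exact_mod_cast Nat.totient_le n
    rw [show (2 : ℝ) - 1 = 1 by norm_num, Real.rpow_one, one_mul]
    simpa [hΦdef] using hle
  have hΦ : LSeriesHasSum Φ w (LSeries Φ w) := hsum.LSeriesHasSum
  have hz : LSeriesHasSum (1 : ℕ → ℂ) w (riemannZeta w) := LSeriesHasSum_one hw1
  have hid : LSeriesHasSum (fun n : ℕ => (n : ℂ)) w (riemannZeta (w - 1)) := by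
    have h1 : (1 : ℝ) < (w - 1).re := by simp [Complex.sub_re]; linarith
    have h := LSeriesHasSum_one (s := w - 1) h1
    have hterm : term (1 : ℕ → ℂ) (w - 1) = term (fun n : ℕ => (n : ℂ)) w := by
      funext n
      rcases eq_or_ne n 0 with rfl | hn
      · simp [term_zero]
      · rw [term_of_ne_zero hn, term_of_ne_zero hn]
        have hne : (n : ℂ) ≠ 0 := Nat.cast_ne_zero.mpr hn
        have hne1 : (n : ℂ) ^ (w - 1) ≠ 0 := by
          simp [Complex.cpow_eq_zero_iff, hne]
        have hpow : (n : ℂ) ^ w = (n : ℂ) ^ (w - 1) * (n : ℂ) := by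
          have h2 := Complex.cpow_add (x := (n : ℂ)) (w - 1) 1 hne
          rw [Complex.cpow_one] at h2
          rw [show w - 1 + 1 = w by ring] at h2
          exact h2
        rw [Pi.one_apply, hpow]
        field_simp
    show HasSum (term (fun n : ℕ => (n : ℂ)) w) (riemannZeta (w - 1))
    rw [← hterm]
    exact h
  have hconv := hΦ.convolution hz
  have hfun : (Φ ⍟ (1 : ℕ → ℂ)) = fun n : ℕ => (n : ℂ) := by
    funext n
    rw [LSeries.convolution_def]
    simp only [Pi.one_apply, mul_one]
    rw [Nat.sum_divisorsAntidiagonal (fun a _ => Φ a)]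
    simp only [hΦdef]
    rw [← Nat.cast_sum]
    rw [Finset.sum_congr rfl fun d _ => rfl]
    norm_cast
    exact Nat.sum_totient n
  rw [hfun] at hconv
  have heq : LSeries Φ w * riemannZeta w = riemannZeta (w - 1) := hconv.unique hid
  have hζ : riemannZeta w ≠ 0 := riemannZeta_ne_zero_of_one_lt_re hw1
  have hval : LSeries Φ w = riemannZeta (w - 1) / riemannZeta w := by
    rw [eq_div_iff hζ]
    exact heq
  exact hval ▸ hΦ

open Classical in
/-- Coefficients supported on k-th powers, with value φ(e) at e^k. -/
noncomputable def Acoef (k : ℕ) : ℕ → ℂ :=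
  fun n => if h : ∃ e, e ^ k = n then ((h.choose.totient : ℕ) : ℂ) else 0

lemma Acoef_pow {k : ℕ} (hk : k ≠ 0) (e : ℕ) : Acoef k (e ^ k) = (e.totient : ℂ) := by
  have h : ∃ x, x ^ k = e ^ k := ⟨e, rfl⟩
  simp only [Acoef]
  rw [dif_pos h, Nat.pow_left_injective hk h.choose_spec]

lemma Acoef_eq_zero {k n : ℕ} (h : ¬ ∃ e, e ^ k = n) : Acoef k n = 0 := by
  simp only [Acoef]
  rw [dif_neg h]

lemma LSeriesHasSum_A (k : ℕ) (hk : 2 ≤ k) {s : ℂ} (hs : 1 < s.re) :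
    LSeriesHasSum (Acoef k) s
      (riemannZeta ((k : ℂ) * s - 1) / riemannZeta ((k : ℂ) * s)) := by
  have hkne : k ≠ 0 := by omega
  have hkre : ((k : ℂ) * s).re = k * s.re := by
    simp [Complex.mul_re]
  have hw : 2 < ((k : ℂ) * s).re := by
    rw [hkre]
    have h2 : (2 : ℝ) ≤ (k : ℝ) := by exact_mod_cast hk
    nlinarith
  have hΦ := LSeriesHasSum_totient hw
  have hinj : Function.Injective (fun e : ℕ => e ^ k) := Nat.pow_left_injective hkne
  have key : ∀ e : ℕ, term (fun n : ℕ => (n.totient : ℂ)) ((k : ℂ) * s) e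
      = term (Acoef k) s (e ^ k) := by
    intro e
    rcases eq_or_ne e 0 with rfl | he
    · rw [zero_pow hkne]
      simp [term_zero]
    · have hek : e ^ k ≠ 0 := pow_ne_zero _ he
      rw [term_of_ne_zero he, term_of_ne_zero hek, Acoef_pow hkne]
      congr 1
      rw [Complex.natCast_cpow_natCast_mul]
      push_cast
      ring_nf
  have h0 : ∀ n ∉ Set.range (fun e : ℕ => e ^ k), term (Acoef k) s n = 0 := by
    intro n hn
    have hA : Acoef k n = 0 := Acoef_eq_zero (by
      rintro ⟨e, he⟩
      exact hn ⟨e, he⟩)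
    rcases eq_or_ne n 0 with rfl | hne
    · exact term_zero _ _
    · rw [term_of_ne_zero hne, hA, zero_div]
  have h' : HasSum (term (fun n : ℕ => (n.totient : ℂ)) ((k : ℂ) * s))
      (riemannZeta ((k : ℂ) * s - 1) / riemannZeta ((k : ℂ) * s)) := hΦ
  have hcomp : HasSum (fun e : ℕ => term (Acoef k) s (e ^ k))
      (riemannZeta ((k : ℂ) * s - 1) / riemannZeta ((k : ℂ) * s)) := (funext key) ▸ h'
  exact (hinj.hasSum_iff h0).mp hcomp

lemma card_filter_dvd (k : ℕ) (hk : k ≠ 0) {n e : ℕ} (hn : n ≠ 0) (he : e ≠ 0) :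
    ((Nat.finMulAntidiag k n).filter fun d => e ∣ Finset.univ.gcd d).card
      = if e ^ k ∣ n then (Nat.finMulAntidiag k (n / e ^ k)).card else 0 := by
  have hek0 : 0 < e ^ k := Nat.pos_of_ne_zero (pow_ne_zero _ he)
  by_cases hdvd : e ^ k ∣ n
  · rw [if_pos hdvd]
    have hq : n / e ^ k ≠ 0 := by
      have := Nat.div_pos (Nat.le_of_dvd (Nat.pos_of_ne_zero hn) hdvd) hek0
      omega
    refine Finset.card_nbij' (fun d i => d i / e) (fun c i => e * c i) ?_ ?_ ?_ ?_
    · intro d hd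
      rw [Finset.mem_coe, Finset.mem_filter, Nat.mem_finMulAntidiag] at hd
      obtain ⟨⟨hprod, -⟩, hgcd⟩ := hd
      have hall : ∀ i, e ∣ d i := fun i =>
        dvd_trans hgcd (Finset.gcd_dvd (Finset.mem_univ i))
      rw [Finset.mem_coe, Nat.mem_finMulAntidiag]
      refine ⟨?_, hq⟩
      have hmul : e ^ k * ∏ i, (d i / e) = n := by
        calc e ^ k * ∏ i, (d i / e)
            = ∏ i : Fin k, (e * (d i / e)) := by
              rw [Finset.prod_mul_distrib, Finset.prod_const, Finset.card_univ,
                Fintype.card_fin]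
          _ = ∏ i, d i := Finset.prod_congr rfl fun i _ => Nat.mul_div_cancel' (hall i)
          _ = n := hprod
      rw [← hmul, Nat.mul_div_cancel_left _ hek0]
    · intro c hc
      rw [Finset.mem_coe, Nat.mem_finMulAntidiag] at hc
      rw [Finset.mem_coe, Finset.mem_filter, Nat.mem_finMulAntidiag]
      refine ⟨⟨?_, hn⟩, ?_⟩
      · rw [Finset.prod_mul_distrib, Finset.prod_const, Finset.card_univ, Fintype.card_fin,
          hc.1, Nat.mul_div_cancel' hdvd]
      · exact Finset.dvd_gcd fun i _ => dvd_mul_right e (c i)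
    · intro d hd
      rw [Finset.mem_coe, Finset.mem_filter] at hd
      have hall : ∀ i, e ∣ d i := fun i =>
        dvd_trans hd.2 (Finset.gcd_dvd (Finset.mem_univ i))
      funext i
      exact Nat.mul_div_cancel' (hall i)
    · intro c hc
      funext i
      exact Nat.mul_div_cancel_left _ (Nat.pos_of_ne_zero he)
  · rw [if_neg hdvd]
    rw [Finset.card_eq_zero, Finset.filter_eq_empty_iff]
    intro d hd
    rw [Nat.mem_finMulAntidiag] at hd
    intro hgcd
    apply hdvd
    have hall : ∀ i, e ∣ d i := fun i =>
      dvd_trans hgcd (Finset.gcd_dvd (Finset.mem_univ i))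
    calc e ^ k = ∏ _i : Fin k, e := by
          rw [Finset.prod_const, Finset.card_univ, Fintype.card_fin]
      _ ∣ ∏ i, d i := Finset.prod_dvd_prod_of_dvd _ _ fun i _ => hall i
      _ = n := hd.1

lemma fgk_eq_nat (k : ℕ) (hk : k ≠ 0) {n : ℕ} (hn : n ≠ 0) :
    fgkNat (fun m => m) k n
      = ∑ e ∈ n.divisors,
          if e ^ k ∣ n then e.totient * (Nat.finMulAntidiag k (n / e ^ k)).card else 0 := by
  rw [fgkNat, piltz_eq hk]
  have step1 : ∀ d ∈ Nat.finMulAntidiag k n,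
      Finset.univ.gcd d = ∑ e ∈ n.divisors, if e ∣ Finset.univ.gcd d then e.totient else 0 := by
    intro d hd
    have hg : Finset.univ.gcd d ∣ n :=
      dvd_trans (Finset.gcd_dvd (Finset.mem_univ ⟨0, Nat.pos_of_ne_zero hk⟩))
        (Nat.dvd_of_mem_finMulAntidiag hd _)
    rw [← Finset.sum_filter, Nat.divisors_filter_dvd_of_dvd hn hg, Nat.sum_totient]
  rw [Finset.sum_congr rfl step1, Finset.sum_comm]
  refine Finset.sum_congr rfl fun e he => ?_
  have he0 : e ≠ 0 := (Nat.pos_of_mem_divisors he).ne'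
  rw [← Finset.sum_filter, Finset.sum_const, smul_eq_mul, mul_comm,
    card_filter_dvd k hk hn he0]
  split_ifs with h
  · rfl
  · exact mul_zero _

lemma fgk_eq (k : ℕ) (hk : 2 ≤ k) (n : ℕ) :
    (fgkNat (fun m => m) k n : ℂ) = (Acoef k ⍟ tauC k) n := by
  classical
  have hkne : k ≠ 0 := by omega
  rcases eq_or_ne n 0 with rfl | hn
  · rw [LSeries.convolution_map_zero]
    rw [fgkNat, piltz_eq hkne, Nat.finMulAntidiag_zero_right, Finset.sum_empty, Nat.cast_zero]
  · rw [fgk_eq_nat k hkne hn, LSeries.convolution_def]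
    show _ = ∑ p ∈ n.divisorsAntidiagonal, Acoef k p.1 * tauC k p.2
    rw [Nat.sum_divisorsAntidiagonal (fun a b => Acoef k a * tauC k b)]
    have hS : (n.divisors.filter fun d => ∃ e, e ^ k = d)
        = (n.divisors.filter fun e => e ^ k ∣ n).image (· ^ k) := by
      ext d
      simp only [Finset.mem_filter, Finset.mem_image, Nat.mem_divisors]
      constructor
      · rintro ⟨⟨hdvd, hn0⟩, e, rfl⟩
        exact ⟨e, ⟨⟨dvd_trans (dvd_pow_self e hkne) hdvd, hn0⟩, hdvd⟩, rfl⟩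
      · rintro ⟨e, ⟨⟨-, hn0⟩, hdvd⟩, rfl⟩
        exact ⟨⟨hdvd, hn0⟩, e, rfl⟩
    have hrhs : ∑ d ∈ n.divisors, Acoef k d * tauC k (n / d)
        = ∑ d ∈ n.divisors.filter fun d => ∃ e, e ^ k = d, Acoef k d * tauC k (n / d) := by
      rw [Finset.sum_filter_of_ne]
      intro d _ hne
      by_contra h
      exact hne (by rw [Acoef_eq_zero h, zero_mul])
    rw [hrhs, hS, Finset.sum_image (fun a _ b _ hab => Nat.pow_left_injective hkne hab)]
    rw [← Finset.sum_filter]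
    push_cast
    refine Finset.sum_congr rfl fun e he => ?_
    rw [Acoef_pow hkne]
    rfl

theorem stmt9 (k : ℕ) (hk : 2 ≤ k) (s : ℝ) (hs : 1 < s) :
    HasSum (fun n : ℕ => (fgkNat (fun m => m) k n : ℂ) / (n : ℂ) ^ (s : ℂ))
      (riemannZeta s ^ k * riemannZeta ((k : ℂ) * (s : ℂ) - 1) / riemannZeta ((k : ℂ) * s)) := by
  have hs' : 1 < (s : ℂ).re := by simpa using hs
  have hT := LSeriesHasSum_tau k (by omega) hs'
  have hA := LSeriesHasSum_A k hk hs'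
  have hconv := hA.convolution hT
  have hval : riemannZeta ((k : ℂ) * s - 1) / riemannZeta ((k : ℂ) * s) * riemannZeta s ^ k
      = riemannZeta s ^ k * riemannZeta ((k : ℂ) * s - 1) / riemannZeta ((k : ℂ) * s) := by
    ring
  rw [hval] at hconv
  have hfun : (fun n : ℕ => (fgkNat (fun m => m) k n : ℂ) / (n : ℂ) ^ (s : ℂ))
      = term (Acoef k ⍟ tauC k) (s : ℂ) := by
    funext n
    rcases eq_or_ne n 0 with rfl | hn
    · rw [term_zero, fgk_eq k hk 0, LSeries.convolution_map_zero, zero_div]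
    · rw [term_of_ne_zero hn, fgk_eq k hk n]
  exact hfun ▸ hconv
end
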